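/- Suppose p ∈ ℂ[z,w] is square free and inner toral. Let Λ be the set of all λ ∈ 𝔻 for which the one-variable polynomial p_λ(w) = p(λ,w) ∈ ℂ[w] has no repeated roots. Then Λ is a cofinite subset of 𝔻, i.e., 𝔻 ∖ Λ is finite. -/

import Mathlib

noncomputable section

open MvPolynomial

/-- Polynomials in two variables `z, w` over `ℂ`. -/
abbrev CPoly2 : Type := MvPolynomial (Fin 2) ℂ

/-- Evaluation of a two-variable polynomial at `(z, w)`. -/
def pevalAt (p : CPoly2) (z w : ℂ) : ℂ := eval ![z, w] p

/-- The zero set `Z(p) ⊆ ℂ²`. -/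
def zeroSet (p : CPoly2) : Set (ℂ × ℂ) := {x | pevalAt p x.1 x.2 = 0}

/-- The open bidisk `𝔻²`. -/
def biDisk : Set (ℂ × ℂ) := {x | ‖x.1‖ < 1 ∧ ‖x.2‖ < 1}

/-- `𝔙(p) = Z(p) ∩ 𝔻²`. -/
def distVar (p : CPoly2) : Set (ℂ × ℂ) := zeroSet p ∩ biDisk

/-- A polynomial is inner toral if its zero set lies in `𝔻² ∪ 𝕋² ∪ 𝔼²`. -/
def InnerToral (p : CPoly2) : Prop :=
  ∀ z w : ℂ, pevalAt p z w = 0 →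
    (‖z‖ < 1 ∧ ‖w‖ < 1) ∨
    (‖z‖ = 1 ∧ ‖w‖ = 1) ∨
    (1 < ‖z‖ ∧ 1 < ‖w‖)

/-- `p` and `q` are relatively prime: no non-constant polynomial divides both. -/
def RelPrime (p q : CPoly2) : Prop :=
  ∀ d : CPoly2, d ∣ p → d ∣ q → d.totalDegree = 0

/-- `p` is square free: the square of a non-constant polynomial never divides `p`. -/
def SqFree (p : CPoly2) : Prop :=
  ∀ d : CPoly2, 0 < d.totalDegree → ¬ d * d ∣ p

/-- `(λ, μ)` is a regular point for `p`: `p(λ,μ) = 0` and `∇p(λ,μ) ≠ 0`. -/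
def IsRegularPoint (p : CPoly2) (x : ℂ × ℂ) : Prop :=
  pevalAt p x.1 x.2 = 0 ∧
    (eval ![x.1, x.2] (pderiv (0 : Fin 2) p) ≠ 0 ∨
     eval ![x.1, x.2] (pderiv (1 : Fin 2) p) ≠ 0)

/-- The one-variable polynomial `p_λ(w) = p(λ, w)`. -/
def pSlice (p : CPoly2) (lam : ℂ) : Polynomial ℂ :=
  MvPolynomial.aeval ![Polynomial.C lam, Polynomial.X] p

section Ops

variable {H : Type*} [NormedAddCommGroup H] [NormedSpace ℂ H]

/-- For `q(z,w) = Σ c_{ij} z^i w^j`, `polyOp q S T = q(S,T) = Σ c_{ij} S^i T^j`. -/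
def polyOp (q : CPoly2) (S T : H →L[ℂ] H) : H →L[ℂ] H :=
  ∑ m ∈ q.support, q.coeff m • (S ^ (m 0) * T ^ (m 1))

/-- A pure isometry: an isometry with `⋂ₙ Vⁿ(H) = {0}`. -/
def IsPureIsometry (S : H →L[ℂ] H) : Prop :=
  (∀ x : H, ‖S x‖ = ‖x‖) ∧ (⋂ n : ℕ, Set.range (⇑(S ^ (n + 1)))) = ({0} : Set H)

/-- A pure `p`-isopair: a commuting pair of pure isometries annihilated by `p`. -/
def IsPureIsopair (p : CPoly2) (S T : H →L[ℂ] H) : Prop :=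
  Commute S T ∧ IsPureIsometry S ∧ IsPureIsometry T ∧ polyOp p S T = 0

/-- The set `{Σ_j q_j(S,T) f_j : q_j ∈ ℂ[z,w]}`. -/
def cyclicSet (S T : H →L[ℂ] H) {k : ℕ} (f : Fin k → H) : Set H :=
  {x | ∃ q : Fin k → CPoly2, x = ∑ j, polyOp (q j) S T (f j)}

/-- `(S,T)` is `k`-cyclic: some `f_1, …, f_k` have `closure {Σ q_j(S,T) f_j} = H`. -/
def IsKCyclic (S T : H →L[ℂ] H) (k : ℕ) : Prop :=
  ∃ f : Fin k → H, closure (cyclicSet S T f) = Set.univ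

/-- `(S,T)` is at most nearly `k`-cyclic: some `f_1, …, f_k` have
`closure {Σ q_j(S,T) f_j}` of finite codimension in `H`. -/
def AtMostNearlyKCyclic (S T : H →L[ℂ] H) (k : ℕ) : Prop :=
  ∃ f : Fin k → H,
    FiniteDimensional ℂ (H ⧸ (Submodule.span ℂ (cyclicSet S T f)).topologicalClosure)

/-- `(S,T)` is nearly `k`-cyclic: at most nearly `k`-cyclic but not `k'` for `k' < k`. -/
def NearlyKCyclic (S T : H →L[ℂ] H) (k : ℕ) : Prop :=
  AtMostNearlyKCyclic S T k ∧ ∀ k' < k, ¬ AtMostNearlyKCyclic S T k'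

/-- Restriction of a continuous linear operator to an invariant subspace. -/
def clmRestrict (S : H →L[ℂ] H) (E : Submodule ℂ H) (h : ∀ x ∈ E, S x ∈ E) : E →L[ℂ] E :=
  { toLinearMap := (S : H →ₗ[ℂ] H).restrict h
    cont := by exact Continuous.subtype_mk (S.continuous.comp continuous_subtype_val) _ }

end Ops

/-- Unitary equivalence of pairs: a unitary `U` with `U S₁ = S₂ U` and `U T₁ = T₂ U`. -/
def UnitarilyEquivPairs {H1 H2 : Type*} [NormedAddCommGroup H1] [NormedSpace ℂ H1]
    [NormedAddCommGroup H2] [NormedSpace ℂ H2]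
    (S1 T1 : H1 →L[ℂ] H1) (S2 T2 : H2 →L[ℂ] H2) : Prop :=
  ∃ U : H1 ≃ₗᵢ[ℂ] H2, (∀ x, U (S1 x) = S2 (U x)) ∧ (∀ x, U (T1 x) = T2 (U x))

section Hilbert

variable {H : Type*} [NormedAddCommGroup H] [InnerProductSpace ℂ H] [CompleteSpace H]

/-- The multiplicity of an isometry: `dim ker V*`. -/
def multiplicity' (S : H →L[ℂ] H) : Cardinal :=
  Module.rank ℂ (LinearMap.ker (ContinuousLinearMap.adjoint S : H →ₗ[ℂ] H))

/-- Finite bimultiplicity: both `mult S` and `mult T` are finite. -/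
def FiniteBimult (S T : H →L[ℂ] H) : Prop :=
  multiplicity' S < Cardinal.aleph0 ∧ multiplicity' T < Cardinal.aleph0

/-- `dim (ker (S - λ)* ∩ ker (T - μ)*)`. -/
def jointKerDim (S T : H →L[ℂ] H) (lam mu : ℂ) : Cardinal :=
  Module.rank ℂ
    ↥(LinearMap.ker (ContinuousLinearMap.adjoint (S - lam • 1) : H →ₗ[ℂ] H) ⊓
      LinearMap.ker (ContinuousLinearMap.adjoint (T - mu • 1) : H →ₗ[ℂ] H))

/-- `(S,T)` has rank `α`: for each `j` and every regular point `(λ,μ)` of `p` in `𝔙(p_j)`,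
`dim (ker (S-λ)* ∩ ker (T-μ)*) = α_j`. -/
def HasRank (p : CPoly2) {s : ℕ} (ps : Fin s → CPoly2) (S T : H →L[ℂ] H)
    (α : Fin s → ℕ) : Prop :=
  ∀ j : Fin s, ∀ x : ℂ × ℂ, x ∈ distVar (ps j) → IsRegularPoint p x →
    jointKerDim S T x.1 x.2 = (α j : Cardinal)

/-- Rank for an isopair attached to a single irreducible polynomial. -/
def HasRankIrred (p : CPoly2) (S T : H →L[ℂ] H) (a : ℕ) : Prop :=
  ∀ x : ℂ × ℂ, x ∈ distVar p → IsRegularPoint p x →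
    jointKerDim S T x.1 x.2 = (a : Cardinal)

end Hilbert

/-- A pair of operators acting on some complex Hilbert space. -/
structure HilbertPair where
  space : Type*
  [nacg : NormedAddCommGroup space]
  [ips : InnerProductSpace ℂ space]
  [cs : CompleteSpace space]
  S : space →L[ℂ] space
  T : space →L[ℂ] space

attribute [instance] HilbertPair.nacg HilbertPair.ips HilbertPair.cs

section Statement6Aux

/-- The iso `ℂ[z,w] ≃ (ℂ[z])[w]` sending `X 0 ↦ C X` and `X 1 ↦ X`. -/
def e2 : CPoly2 ≃ₐ[ℂ] Polynomial (Polynomial ℂ) :=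
  (MvPolynomial.renameEquiv ℂ (Equiv.swap (0 : Fin 2) 1)).trans <|
    (MvPolynomial.finSuccEquiv ℂ 1).trans <|
      Polynomial.mapAlgEquiv <|
        (MvPolynomial.renameEquiv ℂ (Equiv.equivPUnit.{1, 1} (Fin 1))).trans
          (MvPolynomial.pUnitAlgEquiv ℂ)

lemma e2_X0 : e2 (MvPolynomial.X 0) = Polynomial.C Polynomial.X := by
  simp only [e2, AlgEquiv.trans_apply, MvPolynomial.renameEquiv_apply, MvPolynomial.rename_X,
    Equiv.swap_apply_left, ← Fin.succ_zero_eq_one, MvPolynomial.finSuccEquiv_X_succ]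
  simp [Polynomial.mapAlgEquiv]

lemma e2_X1 : e2 (MvPolynomial.X 1) = Polynomial.X := by
  simp only [e2, AlgEquiv.trans_apply, MvPolynomial.renameEquiv_apply, MvPolynomial.rename_X,
    Equiv.swap_apply_right, MvPolynomial.finSuccEquiv_X_zero]
  simp [Polynomial.mapAlgEquiv]

lemma pSlice_eq_map (p : CPoly2) (lam : ℂ) :
    pSlice p lam
      = (e2 p).map ((Polynomial.aeval lam : Polynomial ℂ →ₐ[ℂ] ℂ) : Polynomial ℂ →+* ℂ) := by
  have h : (Polynomial.mapAlgHom (Polynomial.aeval lam)).comp (e2.toAlgHom)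
      = MvPolynomial.aeval ![Polynomial.C lam, Polynomial.X] := by
    apply MvPolynomial.algHom_ext
    intro i
    fin_cases i
    · simpa [e2_X0] using rfl
    · simpa [e2_X1] using rfl
  have h2 := DFunLike.congr_fun h p
  rw [pSlice]
  simpa using h2.symm

abbrev R1 : Type := Polynomial ℂ
abbrev K1 : Type := FractionRing R1

open Polynomial in
lemma squarefree_map_fraction {Q : Polynomial R1} (hQ : Squarefree Q) :
    Squarefree (Q.map (algebraMap R1 K1)) := by
  set φ := algebraMap R1 K1 with hφ
  have hinj : Function.Injective φ := IsFractionRing.injective R1 K1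
  intro d hd
  rcases eq_or_ne d 0 with rfl | hd0
  · exact absurd (Polynomial.map_injective φ hinj
      (by simpa using (zero_dvd_iff.mp (by simpa using hd)))) hQ.ne_zero
  obtain ⟨b, hb⟩ := IsLocalization.integerNormalization_map_to_map (nonZeroDivisors R1) d
  set N := IsLocalization.integerNormalization (nonZeroDivisors R1) d with hN
  have hb' : N.map φ = Polynomial.C (φ b) * d := by
    rw [← hφ] at hb
    rw [hb, Algebra.smul_def, Polynomial.algebraMap_apply]
  have hb0 : φ (b : R1) ≠ 0 := fun h => nonZeroDivisors.ne_zero b.2 (hinj (by simpa using h))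
  have hN0 : N ≠ 0 := by
    intro h
    rw [h, Polynomial.map_zero] at hb'
    rcases mul_eq_zero.mp hb'.symm with h' | h'
    · exact hb0 (by simpa using h')
    · exact hd0 h'
  set c := N.content with hc
  have hc0 : φ c ≠ 0 := fun h => hN0 (content_eq_zero_iff.mp (hinj (by simpa using h)))
  set d0 := N.primPart with hd0def
  have hE : Polynomial.C (φ c) * (d0.map φ) = Polynomial.C (φ b) * d := by
    rw [← hb', ← Polynomial.map_C, ← Polynomial.map_mul, ← N.eq_C_content_mul_primPart]
  have hu1 : IsUnit (Polynomial.C (φ c) : Polynomial K1) :=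
    Polynomial.isUnit_C.mpr (isUnit_iff_ne_zero.mpr hc0)
  have hu2 : IsUnit (Polynomial.C (φ b) : Polynomial K1) :=
    Polynomial.isUnit_C.mpr (isUnit_iff_ne_zero.mpr hb0)
  have hassoc : Associated (d0.map φ) d :=
    ((associated_unit_mul_left _ _ hu1).symm.trans (hE ▸ Associated.refl _)).trans
      (associated_unit_mul_left _ _ hu2)
  have hQ0 : Q ≠ 0 := hQ.ne_zero
  have hQc0 : φ Q.content ≠ 0 := fun h => hQ0 (content_eq_zero_iff.mp (hinj (by simpa using h)))
  have hQE : Q.map φ = Polynomial.C (φ Q.content) * (Q.primPart.map φ) := by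
    rw [← Polynomial.map_C, ← Polynomial.map_mul, ← Q.eq_C_content_mul_primPart]
  have hdvd : (d0.map φ) * (d0.map φ) ∣ Q.primPart.map φ := by
    have h1 : (d0.map φ) * (d0.map φ) ∣ d * d := mul_dvd_mul hassoc.dvd hassoc.dvd
    have h2 : d * d ∣ Polynomial.C (φ Q.content) * (Q.primPart.map φ) := hQE ▸ hd
    exact (associated_unit_mul_left _ _
      (Polynomial.isUnit_C.mpr (isUnit_iff_ne_zero.mpr hQc0))).dvd_iff_dvd_right.mp
      (h1.trans h2)
  have hdvd2 : d0 * d0 ∣ Q.primPart :=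
    Polynomial.IsPrimitive.dvd_of_fraction_map_dvd_fraction_map (K := K1)
      (N.isPrimitive_primPart.mul N.isPrimitive_primPart)
      (by rwa [Polynomial.map_mul])
  have hunit : IsUnit d0 := hQ d0 (hdvd2.trans Q.primPart_dvd)
  have := hunit.map (Polynomial.mapRingHom φ)
  rw [Polynomial.coe_mapRingHom] at this
  exact hassoc.isUnit this

lemma eq_C_of_totalDegree_eq_zero {d : CPoly2} (h : d.totalDegree = 0) :
    d = MvPolynomial.C (MvPolynomial.coeff 0 d) := by
  rw [MvPolynomial.totalDegree_eq_zero_iff] at h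
  ext m
  rw [MvPolynomial.coeff_C]
  split_ifs with hm
  · rw [← hm]
  · by_contra hc
    have hmem := MvPolynomial.mem_support_iff.mpr hc
    refine hm ?_
    have : m = 0 := Finsupp.ext fun x => h m hmem x
    rw [this]

lemma squarefree_of_sqFree {p : CPoly2} (h : SqFree p) : Squarefree p := by
  have hp0 : p ≠ 0 := by
    intro h0
    exact h (MvPolynomial.X 0) (by simp [MvPolynomial.totalDegree_X]) (by simp [h0])
  intro d hdd
  rcases Nat.eq_zero_or_pos d.totalDegree with h0 | h0
  · have hd' : d = MvPolynomial.C (MvPolynomial.coeff 0 d) := eq_C_of_totalDegree_eq_zero h0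
    have hc0 : MvPolynomial.coeff 0 d ≠ 0 := by
      intro hc
      rw [hd', hc] at hdd
      simp only [map_zero, zero_mul, zero_dvd_iff] at hdd
      exact hp0 hdd
    rw [hd']
    exact (isUnit_iff_ne_zero.mpr hc0).map (MvPolynomial.C : ℂ →+* CPoly2)
  · exact absurd hdd (h d h0)

lemma squarefree_algEquiv {A B : Type*} [CommRing A] [CommRing B] [Algebra ℂ A] [Algebra ℂ B]
    (e : A ≃ₐ[ℂ] B) {a : A} (h : Squarefree a) : Squarefree (e a) := by
  intro d hd
  have h1 : e.symm d * e.symm d ∣ a := by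
    have := map_dvd e.symm hd
    simpa using this
  have := (h _ h1).map (e : A →+* B)
  simpa using this

end Statement6Aux

/-- the set of `λ ∈ 𝔻` for which `p_λ(w)` has no repeated roots is
cofinite in `𝔻`. -/
theorem statement6 (p : CPoly2) (hsf : SqFree p) (hit : InnerToral p) :
    ({lam : ℂ | ‖lam‖ < 1} \
      {lam : ℂ | ‖lam‖ < 1 ∧
        ∀ mu : ℂ, Polynomial.rootMultiplicity mu (pSlice p lam) ≤ 1}).Finite := by
  classical
  set φ := algebraMap R1 K1 with hφ
  have hQsq : Squarefree (e2 p) := squarefree_algEquiv e2 (squarefree_of_sqFree hsf)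
  have hQK : Squarefree ((e2 p).map φ) := squarefree_map_fraction hQsq
  have hsep : ((e2 p).map φ).Separable := PerfectField.separable_iff_squarefree.mpr hQK
  obtain ⟨a, b, hab⟩ := hsep
  obtain ⟨s, hs⟩ := IsLocalization.integerNormalization_map_to_map (nonZeroDivisors R1) a
  obtain ⟨t, ht⟩ := IsLocalization.integerNormalization_map_to_map (nonZeroDivisors R1) b
  set A := IsLocalization.integerNormalization (nonZeroDivisors R1) a with hA
  set B := IsLocalization.integerNormalization (nonZeroDivisors R1) b with hB
  set r : R1 := (s : R1) * (t : R1) with hr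
  have hr0 : r ≠ 0 := mul_ne_zero (nonZeroDivisors.ne_zero s.2) (nonZeroDivisors.ne_zero t.2)
  have key : Polynomial.C (t : R1) * A * (e2 p)
      + Polynomial.C (s : R1) * B * (Polynomial.derivative (e2 p)) = Polynomial.C r := by
    apply Polynomial.map_injective φ (IsFractionRing.injective R1 K1)
    rw [← hφ] at hs ht
    rw [Polynomial.map_add, Polynomial.map_mul, Polynomial.map_mul, Polynomial.map_mul,
      Polynomial.map_mul, Polynomial.map_C, Polynomial.map_C, Polynomial.map_C, hs, ht,
      ← Polynomial.derivative_map, Algebra.smul_def, Algebra.smul_def,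
      Polynomial.algebraMap_apply, Polynomial.algebraMap_apply, hr, map_mul]
    rw [Polynomial.C_mul]
    linear_combination (Polynomial.C (φ (s : R1)) * Polynomial.C (φ (t : R1))) * hab
  have good : ∀ lam : ℂ, Polynomial.eval lam r ≠ 0 →
      ∀ mu : ℂ, Polynomial.rootMultiplicity mu (pSlice p lam) ≤ 1 := by
    intro lam hlam mu
    set ev : R1 →+* ℂ :=
      ((Polynomial.aeval lam : Polynomial ℂ →ₐ[ℂ] ℂ) : Polynomial ℂ →+* ℂ) with hev
    have hevr : ev r ≠ 0 := by
      simpa [hev, Polynomial.coe_aeval_eq_eval] using hlam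
    set q := (e2 p).map ev with hq
    have hslice : pSlice p lam = q := pSlice_eq_map p lam
    have keyev := congrArg (Polynomial.map ev) key
    rw [Polynomial.map_add, Polynomial.map_mul, Polynomial.map_mul, Polynomial.map_mul,
      Polynomial.map_mul, Polynomial.map_C, Polynomial.map_C, Polynomial.map_C,
      ← Polynomial.derivative_map, ← hq] at keyev
    have hcop : IsCoprime q (Polynomial.derivative q) := by
      refine ⟨Polynomial.C (ev r)⁻¹ * (Polynomial.C (ev (t : R1)) * (A.map ev)),
              Polynomial.C (ev r)⁻¹ * (Polynomial.C (ev (s : R1)) * (B.map ev)), ?_⟩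
      have h3 : Polynomial.C (ev r)⁻¹ * (Polynomial.C (ev (t : R1)) * (A.map ev) * q
          + Polynomial.C (ev (s : R1)) * (B.map ev) * Polynomial.derivative q)
          = Polynomial.C (ev r)⁻¹ * Polynomial.C (ev r) := by rw [keyev]
      rw [← Polynomial.C_mul, inv_mul_cancel₀ hevr, Polynomial.C_1] at h3
      rw [← h3]
      ring
    have hsq : Squarefree q := Polynomial.Separable.squarefree hcop
    rw [hslice]
    by_contra hgt
    push_neg at hgt
    have h2 : (Polynomial.X - Polynomial.C mu) * (Polynomial.X - Polynomial.C mu) ∣ q := by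
      have hpow : (Polynomial.X - Polynomial.C mu) ^ 2
          ∣ (Polynomial.X - Polynomial.C mu) ^ (Polynomial.rootMultiplicity mu q) :=
        pow_dvd_pow _ hgt
      have := hpow.trans (Polynomial.pow_rootMultiplicity_dvd q mu)
      rwa [sq] at this
    exact Polynomial.not_isUnit_X_sub_C mu (hsq _ h2)
  apply Set.Finite.subset (Polynomial.finite_setOf_isRoot hr0)
  rintro lam ⟨h1, h2⟩
  simp only [Set.mem_setOf_eq] at h1 h2 ⊢
  by_contra hroot
  exact h2 ⟨h1, good lam hroot⟩
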